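/- Fix n ≥ 1 and δ = (δ_1,…,δ_n) ∈ {0,1}^n. For all integers k > n and 1 ≤ ℓ ≤ k, the specialized two-row factorial Schur Q-polynomial Q_{k,ℓ}(x_δ | x_⟨n⟩) is the zero polynomial in ℤ[x_1,…,x_n]. -/

import Mathlib

open Finset

noncomputable section

/-- The ambient polynomial ring `ℤ[x_1,…,x_N; a_2,a_3,…]`: the variable `Sum.inl i`
is `x_{i+1}`, and `Sum.inr j` is the parameter `a_{j+2}`. -/
abbrev QRing (N : ℕ) := MvPolynomial (Fin N ⊕ ℕ) ℤ

/-- The variable `x_i` (0-indexed). -/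
def xv (N : ℕ) (i : Fin N) : QRing N := MvPolynomial.X (Sum.inl i)

/-- The parameter `a_m` for `m ≥ 2`; `a_1 = 0`. -/
def av (N : ℕ) (m : ℕ) : QRing N :=
  if 2 ≤ m then MvPolynomial.X (Sum.inr (m - 2)) else 0

/-- The generating series `∏_{i=1}^N (1+x_i z)/(1−x_i z)`. -/
def genSeries (N : ℕ) : PowerSeries (QRing N) :=
  ∏ i : Fin N,
    (1 + PowerSeries.C (xv N i) * PowerSeries.X) *
      PowerSeries.invOfUnit (1 - PowerSeries.C (xv N i) * PowerSeries.X) 1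

/-- The Schur Q-polynomial `Q_m(x)`: the coefficient of `z^m` in
`∏_{i=1}^N (1+x_i z)/(1−x_i z)`. -/
def Qone (N m : ℕ) : QRing N := PowerSeries.coeff m (genSeries N)

/-- Elementary symmetric polynomial `e_j` in the parameters `a_m`, `m ∈ s`. -/
def esymA (N : ℕ) (s : Finset ℕ) (j : ℕ) : QRing N :=
  ∑ t ∈ s.powersetCard j, ∏ m ∈ t, av N m

/-- Complete homogeneous symmetric polynomial `h_m` in the parameters `a_i`, `i ∈ s`. -/
def hsymA (N : ℕ) (s : Finset ℕ) (m : ℕ) : QRing N :=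
  ∑ t ∈ s.sym m, ((t : Multiset ℕ).map (av N)).prod

/-- The one-row factorial Schur Q-polynomial
`Q_m(x|a) = Σ_{j=0}^{m−1} (−1)^j e_j(a_2,…,a_m) Q_{m−j}(x)` for `m ≥ 1`, `Q_0(x|a) = 1`. -/
def Qfact (N m : ℕ) : QRing N :=
  if m = 0 then 1 else
    ∑ j ∈ range m, (-1) ^ j * esymA N (Icc 2 m) j * Qone N (m - j)

/-- The coefficient `f_{k,ℓ}^{r,s}(a) = (−1)^{ℓ−s} Σ_{j=0}^{k+ℓ−r−s}
2 h_{k+ℓ−r−s−j}(a_{k+1},…,a_{r+1}) e_j(a_{s+2},…,a_ℓ)`. -/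
def fco (N k l r s : ℕ) : QRing N :=
  (-1) ^ (l - s) *
    ∑ j ∈ range (k + l - r - s + 1),
      2 * hsymA N (Icc (k + 1) (r + 1)) (k + l - r - s - j) * esymA N (Icc (s + 2) l) j

/-- The two-row factorial Schur Q-polynomial `Q_{k,ℓ}(x|a)` for `k ≥ ℓ ≥ 1`. -/
def Qfact2 (N k l : ℕ) : QRing N :=
  Qfact N k * Qfact N l +
    2 * ∑ i ∈ Icc 1 l, (-1) ^ i * Qfact N (k + i) * Qfact N (l - i) +
    ∑ r ∈ Icc k (k + l - 1), ∑ s ∈ range (k + l - r),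
      fco N k l r s * Qfact N r * Qfact N s

/-- The specialization `ℤ[x;a] → ℤ[x_1,…,x_n]` sending `x_i ↦ δ_i x_i` (for
`δ ∈ {0,1}^n`) and `a_m ↦ x_{n−m+2}` for `2 ≤ m ≤ n+1`, `a_m ↦ 0` for `m > n+1`
(0-indexed: the variable `Sum.inr j`, i.e. `a_{j+2}`, goes to `x` with 0-indexed
index `n−1−j` when `j < n`, and to `0` otherwise). -/
def specHom (n : ℕ) (δ : Fin n → Bool) : QRing n →+* MvPolynomial (Fin n) ℤ :=
  MvPolynomial.eval₂Hom (Int.castRingHom (MvPolynomial (Fin n) ℤ))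
    (Sum.elim (fun i => if δ i then MvPolynomial.X i else 0)
      (fun j => if h : j < n then MvPolynomial.X (⟨n - 1 - j, by omega⟩ : Fin n) else 0))

/-! ### Auxiliary lemmas -/

lemma coeff_prod_one_add {R : Type*} [CommRing R] {ι : Type*} [DecidableEq ι]
    (s : Finset ι) (r : ι → R) :
    ∀ j, PowerSeries.coeff j (∏ i ∈ s, (1 + PowerSeries.C (r i) * PowerSeries.X)) =
      ∑ t ∈ s.powersetCard j, ∏ i ∈ t, r i := by
  induction s using Finset.induction_on with
  | empty =>
    intro j
    cases j with
    | zero => simp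
    | succ j =>
      rw [Finset.powersetCard_eq_empty.mpr (by simp)]
      simp
  | @insert a s ha ih =>
    intro j
    rw [Finset.prod_insert ha, add_mul, one_mul, mul_assoc, map_add, PowerSeries.coeff_C_mul]
    cases j with
    | zero =>
      simp only [powersetCard_zero, sum_singleton, prod_empty]
      have h0 : (PowerSeries.coeff 0) (PowerSeries.X *
          ∏ i ∈ s, (1 + PowerSeries.C (r i) * PowerSeries.X)) = 0 := by
        simp [PowerSeries.coeff_zero_eq_constantCoeff]
      rw [h0, mul_zero, add_zero, ih 0]
      simp
    | succ j =>
      rw [PowerSeries.coeff_succ_X_mul, ih, ih,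
        Finset.powersetCard_succ_insert ha, Finset.sum_union, Finset.sum_image]
      · rw [Finset.mul_sum]
        refine congrArg (_ + ·) (Finset.sum_congr rfl fun t ht => ?_)
        exact (Finset.prod_insert fun hat => ha ((Finset.mem_powersetCard.mp ht).1 hat)).symm
      · intro t1 h1 t2 h2 heq
        have a1 : a ∉ t1 := fun h => ha ((Finset.mem_powersetCard.mp h1).1 h)
        have a2 : a ∉ t2 := fun h => ha ((Finset.mem_powersetCard.mp h2).1 h)
        rw [← Finset.erase_insert a1, ← Finset.erase_insert a2, heq]
      · rw [Finset.disjoint_left]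
        intro t h1 h2
        obtain ⟨u, hu, rfl⟩ := Finset.mem_image.mp h2
        exact ha ((Finset.mem_powersetCard.mp h1).1 (Finset.mem_insert_self a u))

lemma genSeries_mul_eq (N : ℕ) :
    genSeries N * ∏ i : Fin N, (1 - PowerSeries.C (xv N i) * PowerSeries.X) =
      ∏ i : Fin N, (1 + PowerSeries.C (xv N i) * PowerSeries.X) := by
  rw [genSeries, ← Finset.prod_mul_distrib]
  refine Finset.prod_congr rfl fun i _ => ?_
  rw [mul_assoc, PowerSeries.invOfUnit_mul _ 1 (by simp), mul_one]

lemma Qfact_spec_zero (n : ℕ) (δ : Fin n → Bool) (m : ℕ) (hm : n < m) :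
    specHom n δ (Qfact n m) = 0 := by
  classical
  set R := MvPolynomial (Fin n) ℤ
  set φ := specHom n δ with hφ
  set G := PowerSeries.map φ (genSeries n) with hG
  set c : Fin n → R := fun i => φ (xv n i) with hcdef
  set w : ℕ → R := fun i => φ (av n i) with hwdef
  have hc : ∀ i, c i = if δ i then MvPolynomial.X i else 0 := by
    intro i
    simp [hcdef, hφ, specHom, xv]
  have hw_hi : ∀ i, n + 1 < i → w i = 0 := by
    intro i hi
    have h2 : 2 ≤ i := by omega
    simp only [hwdef, hφ, specHom, av, if_pos h2, MvPolynomial.eval₂Hom_X', Sum.elim_inr]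
    rw [dif_neg (by omega)]
  -- the specialized series identity
  have hGmul : G * ∏ i : Fin n, (1 - PowerSeries.C (c i) * PowerSeries.X) =
      ∏ i : Fin n, (1 + PowerSeries.C (c i) * PowerSeries.X) := by
    have := congrArg (PowerSeries.map φ) (genSeries_mul_eq n)
    simpa [map_prod, PowerSeries.map_C, PowerSeries.map_X] using this
  -- P in two forms
  set P : PowerSeries R :=
      ∏ i ∈ Icc 2 (n + 1), (1 + PowerSeries.C (-(w i)) * PowerSeries.X) with hPdef
  have hPuniv : P = ∏ j : Fin n,
      (1 + PowerSeries.C (-(MvPolynomial.X j)) * PowerSeries.X) := by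
    rw [hPdef]
    refine Finset.prod_bij' (fun i hi => (⟨n - 1 - (i - 2), by
        have := Finset.mem_Icc.mp hi; omega⟩ : Fin n))
      (fun j _ => n + 1 - (j : ℕ)) ?_ ?_ ?_ ?_ ?_
    · intro a ha; exact Finset.mem_univ _
    · intro j _
      have := j.isLt
      refine Finset.mem_Icc.mpr ?_
      omega
    · intro a ha
      have := Finset.mem_Icc.mp ha
      dsimp only
      omega
    · intro j _
      have := j.isLt
      ext
      dsimp only
      omega
    · intro a ha
      have hmem := Finset.mem_Icc.mp ha
      have hwval : w a = MvPolynomial.X (⟨n - 1 - (a - 2), by omega⟩ : Fin n) := by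
        simp only [hwdef, hφ, specHom, av, if_pos hmem.1, MvPolynomial.eval₂Hom_X',
          Sum.elim_inr]
        rw [dif_pos (by omega)]
      rw [hwval]
  -- coefficients of P vanish above n
  have hPcoeff : ∀ j, n < j → PowerSeries.coeff j P = 0 := by
    intro j hj
    rw [hPuniv, coeff_prod_one_add]
    rw [Finset.powersetCard_eq_empty.mpr (by simp; omega), Finset.sum_empty]
  -- step 1: the specialized Qfact as a convolution sum
  have hstep1 : φ (Qfact n m) =
      ∑ j ∈ range m, PowerSeries.coeff j P * PowerSeries.coeff (m - j) G := by
    rw [Qfact, if_neg (by omega), map_sum]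
    refine Finset.sum_congr rfl fun j hj => ?_
    have hqone : φ (Qone n (m - j)) = PowerSeries.coeff (m - j) G := by
      rw [Qone, hG, PowerSeries.coeff_map]
    have hesym : φ (esymA n (Icc 2 m) j) =
        ∑ t ∈ (Icc 2 (n + 1)).powersetCard j, ∏ i ∈ t, w i := by
      rw [esymA, map_sum]
      have hsub : (Icc 2 (n + 1)).powersetCard j ⊆ (Icc 2 m).powersetCard j :=
        Finset.powersetCard_mono (Finset.Icc_subset_Icc le_rfl (by omega))
      rw [← Finset.sum_subset hsub]
      · exact Finset.sum_congr rfl fun t _ => by rw [map_prod]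
      · intro t ht hnt
        obtain ⟨hts, htc⟩ := Finset.mem_powersetCard.mp ht
        have : ∃ i ∈ t, i ∉ Icc 2 (n + 1) := by
          by_contra hcon
          push_neg at hcon
          exact hnt (Finset.mem_powersetCard.mpr ⟨fun x hx => hcon x hx, htc⟩)
        obtain ⟨i, hit, hit2⟩ := this
        have hi2 : 2 ≤ i ∧ i ≤ m := Finset.mem_Icc.mp (hts hit)
        have : n + 1 < i := by
          rcases Finset.mem_Icc.mp (hts hit) with ⟨h2, _⟩
          by_contra hcc
          exact hit2 (Finset.mem_Icc.mpr ⟨h2, by omega⟩)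
        rw [map_prod]
        exact Finset.prod_eq_zero hit (hw_hi i this)
    have hcoeffP : PowerSeries.coeff j P =
        (-1 : R) ^ j * ∑ t ∈ (Icc 2 (n + 1)).powersetCard j, ∏ i ∈ t, w i := by
      rw [hPdef, coeff_prod_one_add, Finset.mul_sum]
      refine Finset.sum_congr rfl fun t ht => ?_
      have htc := (Finset.mem_powersetCard.mp ht).2
      have hneg : ∀ i ∈ t, -w i = (-1 : R) * w i := fun _ _ => by ring
      rw [Finset.prod_congr rfl hneg, Finset.prod_mul_distrib, Finset.prod_const, htc]
    rw [map_mul, map_mul, map_pow, map_neg, map_one, hqone, hesym, hcoeffP]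
  -- step 2: extend the sum to range (m+1) and identify as a product coefficient
  have hstep2 : ∑ j ∈ range m, PowerSeries.coeff j P * PowerSeries.coeff (m - j) G =
      PowerSeries.coeff m (P * G) := by
    rw [PowerSeries.coeff_mul, Finset.Nat.sum_antidiagonal_eq_sum_range_succ_mk,
      Finset.sum_range_succ, hPcoeff m hm, zero_mul, add_zero]
  -- step 3: P * G is a polynomial of degree ≤ n
  have hstep3 : PowerSeries.coeff m (P * G) = 0 := by
    set d : Fin n → R := fun i => if δ i then 0 else -(MvPolynomial.X i) with hddef
    have hsplit : P = (∏ i : Fin n, (1 - PowerSeries.C (c i) * PowerSeries.X)) *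
        ∏ i : Fin n, (1 + PowerSeries.C (d i) * PowerSeries.X) := by
      rw [hPuniv, ← Finset.prod_mul_distrib]
      refine Finset.prod_congr rfl fun i _ => ?_
      rw [hc i, hddef]
      by_cases h : δ i <;> simp [h] <;> ring
    have hmerge : P * G = ∏ i : Fin n,
        (1 + PowerSeries.C ((c i) + (d i)) * PowerSeries.X) := by
      rw [hsplit, mul_comm _ (∏ i : Fin n, (1 + PowerSeries.C (d i) * PowerSeries.X)),
        mul_assoc, mul_comm _ G, hGmul, ← Finset.prod_mul_distrib]
      refine Finset.prod_congr rfl fun i _ => ?_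
      rw [hc i, hddef]
      by_cases h : δ i <;> simp [h] <;> ring
    rw [hmerge, coeff_prod_one_add,
      Finset.powersetCard_eq_empty.mpr (by simp; omega), Finset.sum_empty]
  rw [hstep1, hstep2, hstep3]

/-- For `n ≥ 1`, `δ ∈ {0,1}^n`, `k > n` and `1 ≤ ℓ ≤ k`, the specialized two-row
factorial Schur Q-polynomial `Q_{k,ℓ}(x_δ | x_⟨n⟩)` is the zero polynomial in
`ℤ[x_1,…,x_n]`. -/
theorem Qfact2_specialized_vanishes (n : ℕ) (hn : 1 ≤ n) (δ : Fin n → Bool)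
    (k l : ℕ) (hk : n < k) (hl1 : 1 ≤ l) (hlk : l ≤ k) :
    specHom n δ (Qfact2 n k l) = 0 := by
  rw [Qfact2]
  rw [map_add, map_add, map_mul, map_mul, map_sum]
  rw [Qfact_spec_zero n δ k hk, zero_mul]
  have h2 : ∀ i ∈ Icc 1 l, specHom n δ ((-1) ^ i * Qfact n (k + i) * Qfact n (l - i)) = 0 := by
    intro i hi
    rw [map_mul, map_mul, Qfact_spec_zero n δ (k + i) (by omega), mul_zero, zero_mul]
  have h3 : ∀ r ∈ Icc k (k + l - 1),
      specHom n δ (∑ s ∈ range (k + l - r), fco n k l r s * Qfact n r * Qfact n s) = 0 := by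
    intro r hr
    rw [map_sum]
    refine Finset.sum_eq_zero fun s _ => ?_
    have hrk : k ≤ r := (Finset.mem_Icc.mp hr).1
    rw [map_mul, map_mul, Qfact_spec_zero n δ r (by omega), mul_zero, zero_mul]
  rw [map_sum, Finset.sum_congr rfl h3, Finset.sum_congr rfl h2]
  simp


end
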